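/- Let n, k, j be integers with 0 ≤ j ≤ k − 1, k ≥ 1, and n ≥ 2k + 1. Let X be the set of all k-element subsets of {1,…,n}. For i ∈ {1,…,j} let p_i = n−2i+2 and q_i = n−2i+1, and let b = n−2j. Call x ∈ X compatible if for every i ∈ {1,…,j}, x contains exactly one of p_i, q_i; for compatible x let sgn(x) = (−1)^{#{i : q_i ∈ x}}. Define vectors in ℝ^X by: v(x) = sgn(x)/sqrt(2^j·binom(n−2j, k−j)) if x is compatible, and 0 otherwise; w_∘(x) = sgn(x)/sqrt(2^j·binom(n−2j−1, k−j)) if x is compatible and b ∉ x, and 0 otherwise; w_•(x) = sgn(x)/sqrt(2^j·binom(n−2j−1, k−j−1)) if x is compatible and b ∈ x, and 0 otherwise. Then: (1) w_∘ and w_• are orthonormal (each has Euclidean norm 1 and ⟨w_∘, w_•⟩ = 0); (2) v is a unit vector; and (3) v = sqrt((n−k−j)/(n−2j))·w_∘ + sqrt((k−j)/(n−2j))·w_•. -/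

import Mathlib

open scoped RealInnerProductSpace

/-- The family `X` of all `k`-element subsets of `{1, …, n}`. -/
abbrev SetFamily (n k : ℕ) := {x : Finset ℕ // x ∈ Finset.powersetCard k (Finset.Icc 1 n)}

/-- `x` is compatible if for every `i ∈ {1,…,j}` it contains exactly one of
`p_i = n−2i+2` and `q_i = n−2i+1`. -/
abbrev IsCompatible (n j : ℕ) (x : Finset ℕ) : Prop :=
  ∀ i ∈ Finset.Icc 1 j,
    (n - 2*i + 2 ∈ x ∧ n - 2*i + 1 ∉ x) ∨ (n - 2*i + 1 ∈ x ∧ n - 2*i + 2 ∉ x)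

/-- `sgn(x) = (−1)^{#{i ∈ {1,…,j} : q_i ∈ x}}` where `q_i = n−2i+1`. -/
noncomputable def sgn (n j : ℕ) (x : Finset ℕ) : ℝ :=
  (-1) ^ ((Finset.Icc 1 j).filter (fun i => n - 2*i + 1 ∈ x)).card

/-- The vector `v ∈ ℝ^X`: `v(x) = sgn(x)/sqrt(2^j·C(n−2j, k−j))` if `x` is compatible,
else `0`. -/
noncomputable def vVec (n k j : ℕ) : EuclideanSpace ℝ (SetFamily n k) :=
  (WithLp.equiv 2 _).symm fun x =>
    if IsCompatible n j x.1 then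
      sgn n j x.1 / Real.sqrt (2 ^ j * ((n - 2*j).choose (k - j) : ℝ))
    else 0

/-- The vector `w_∘ ∈ ℝ^X`: `w_∘(x) = sgn(x)/sqrt(2^j·C(n−2j−1, k−j))` if `x` is
compatible and `b = n−2j ∉ x`, else `0`. -/
noncomputable def wOut (n k j : ℕ) : EuclideanSpace ℝ (SetFamily n k) :=
  (WithLp.equiv 2 _).symm fun x =>
    if IsCompatible n j x.1 ∧ n - 2*j ∉ x.1 then
      sgn n j x.1 / Real.sqrt (2 ^ j * ((n - 2*j - 1).choose (k - j) : ℝ))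
    else 0

/-- The vector `w_• ∈ ℝ^X`: `w_•(x) = sgn(x)/sqrt(2^j·C(n−2j−1, k−j−1))` if `x` is
compatible and `b = n−2j ∈ x`, else `0`. -/
noncomputable def wIn (n k j : ℕ) : EuclideanSpace ℝ (SetFamily n k) :=
  (WithLp.equiv 2 _).symm fun x =>
    if IsCompatible n j x.1 ∧ n - 2*j ∈ x.1 then
      sgn n j x.1 / Real.sqrt (2 ^ j * ((n - 2*j - 1).choose (k - j - 1) : ℝ))
    else 0

namespace VDecompAux
open Finset


lemma card_filter_mem_erase (U : Finset ℕ) (e : ℕ) (he : e ∈ U) (r : ℕ) (P : Finset ℕ → Prop)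
    [DecidablePred P] :
    ((powersetCard (r+1) U).filter (fun s => e ∈ s ∧ P (s.erase e))).card
    = ((powersetCard r (U.erase e)).filter P).card := by
  apply Finset.card_nbij' (fun s => s.erase e) (fun t => insert e t)
  · intro s hs
    simp only [mem_coe, mem_filter, mem_powersetCard] at hs ⊢
    obtain ⟨⟨hsub, hcard⟩, hes, hP⟩ := hs
    refine ⟨⟨fun a ha => ?_, ?_⟩, hP⟩
    · rcases mem_erase.mp ha with ⟨hne, ha'⟩
      exact mem_erase.mpr ⟨hne, hsub ha'⟩
    · rw [card_erase_of_mem hes, hcard]; omega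
  · intro t ht
    simp only [mem_coe, mem_filter, mem_powersetCard] at ht ⊢
    obtain ⟨⟨hsub, hcard⟩, hP⟩ := ht
    have het : e ∉ t := fun h => (mem_erase.mp (hsub h)).1 rfl
    refine ⟨⟨?_, ?_⟩, ?_, ?_⟩
    · intro a ha
      rcases mem_insert.mp ha with rfl | ha'
      · exact he
      · exact (erase_subset _ _) (hsub ha')
    · rw [card_insert_of_notMem het, hcard]
    · exact mem_insert_self _ _
    · rw [erase_insert het]; exact hP
  · intro s hs
    simp only [mem_coe, mem_filter] at hs
    exact insert_erase hs.2.1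
  · intro t ht
    simp only [mem_coe, mem_filter, mem_powersetCard] at ht
    have het : e ∉ t := fun h => (mem_erase.mp (ht.1.1 h)).1 rfl
    exact erase_insert het

lemma filter_not_mem_powersetCard (U : Finset ℕ) (e : ℕ) (r : ℕ) (P : Finset ℕ → Prop)
    [DecidablePred P] :
    ((powersetCard r U).filter (fun s => e ∉ s ∧ P s)).card
    = ((powersetCard r (U.erase e)).filter P).card := by
  congr 1
  ext s
  simp only [mem_filter, mem_powersetCard, subset_erase]
  tauto

lemma count_compatible (n k : ℕ) (j : ℕ) (hjn : 2*j ≤ n) (hjk : j ≤ k) (P : Finset ℕ → Prop)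
    [DecidablePred P] :
    (((powersetCard k (Icc 1 n)).filter
        (fun x => IsCompatible n j x ∧ P (x ∩ Icc 1 (n - 2*j)))).card)
    = 2^j * (((powersetCard (k-j) (Icc 1 (n - 2*j))).filter P).card) := by
  induction j generalizing P with
  | zero =>
    simp only [pow_zero, one_mul, Nat.sub_zero, Nat.mul_zero]
    congr 1
    apply filter_congr
    intro x hx
    simp only [mem_powersetCard] at hx
    have hxx : x ∩ Icc 1 n = x := inter_eq_left.mpr hx.1
    constructor
    · rintro ⟨-, h⟩; rwa [hxx] at h
    · intro h
      exact ⟨fun i hi => by simp at hi, by rwa [hxx]⟩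
  | succ j ih =>
    have h2j : 2*j ≤ n := by omega
    have key : ∀ x ∈ powersetCard k (Icc 1 n),
        (IsCompatible n (j+1) x ∧ P (x ∩ Icc 1 (n - 2*(j+1)))) ↔
        (IsCompatible n j x ∧
          ((n - 2*j ∈ x ∩ Icc 1 (n-2*j) ∧ n - 2*j - 1 ∉ x ∩ Icc 1 (n-2*j)) ∨
           (n - 2*j - 1 ∈ x ∩ Icc 1 (n-2*j) ∧ n - 2*j ∉ x ∩ Icc 1 (n-2*j))) ∧
          P ((x ∩ Icc 1 (n-2*j)) ∩ Icc 1 (n - 2*j - 2))) := by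
      intro x hx
      have hIccsub : Icc 1 (n - 2*j - 2) ⊆ Icc 1 (n - 2*j) := Icc_subset_Icc_right (by omega)
      have hinter : (x ∩ Icc 1 (n-2*j)) ∩ Icc 1 (n - 2*j - 2) = x ∩ Icc 1 (n - 2*(j+1)) := by
        rw [inter_assoc, inter_eq_right.mpr hIccsub]
        have h22 : n - 2*j - 2 = n - 2*(j+1) := by omega
        rw [h22]
      have hcomp : IsCompatible n (j+1) x ↔ IsCompatible n j x ∧
          ((n - 2*(j+1) + 2 ∈ x ∧ n - 2*(j+1) + 1 ∉ x) ∨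
           (n - 2*(j+1) + 1 ∈ x ∧ n - 2*(j+1) + 2 ∉ x)) := by
      -- forward
        constructor
        · intro h
          constructor
          · intro i hi
            rw [mem_Icc] at hi
            exact h i (mem_Icc.mpr ⟨hi.1, by omega⟩)
          · exact h (j+1) (mem_Icc.mpr ⟨by omega, le_refl _⟩)
        · rintro ⟨h1, h2⟩ i hi
          rw [mem_Icc] at hi
          rcases Nat.lt_or_ge i (j+1) with hlt | hge
          · exact h1 i (mem_Icc.mpr ⟨hi.1, by omega⟩)
          · have hij : i = j + 1 := by omega
            rw [hij]; exact h2
      have hp2 : n - 2*(j+1) + 2 = n - 2*j := by omega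
      have hp1 : n - 2*(j+1) + 1 = n - 2*j - 1 := by omega
      have hmem0 : n - 2*j ∈ x ∩ Icc 1 (n-2*j) ↔ n - 2*j ∈ x := by
        simp only [mem_inter, mem_Icc, and_iff_left_iff_imp]; intro _; omega
      have hmem1 : n - 2*j - 1 ∈ x ∩ Icc 1 (n-2*j) ↔ n - 2*j - 1 ∈ x := by
        simp only [mem_inter, mem_Icc, and_iff_left_iff_imp]; intro _; omega
      rw [hcomp, hinter, hmem0, hmem1, hp2, hp1]
      rw [and_assoc]
    rw [filter_congr key,
      ih h2j (by omega) (fun s => ((n - 2*j ∈ s ∧ n - 2*j - 1 ∉ s) ∨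
        (n - 2*j - 1 ∈ s ∧ n - 2*j ∉ s)) ∧ P (s ∩ Icc 1 (n - 2*j - 2)))]
    -- now count the inner filter
    have split : ((powersetCard (k-j) (Icc 1 (n - 2*j))).filter
        (fun s => ((n - 2*j ∈ s ∧ n - 2*j - 1 ∉ s) ∨ (n - 2*j - 1 ∈ s ∧ n - 2*j ∉ s))
          ∧ P (s ∩ Icc 1 (n - 2*j - 2)))).card
        = 2 * ((powersetCard (k-(j+1)) (Icc 1 (n - 2*(j+1)))).filter P).card := by
      have hkj : k - j = (k - (j+1)) + 1 := by omega
      have hne : (n - 2*j : ℕ) ≠ n - 2*j - 1 := by omega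
      have hIcc1 : (Icc 1 (n - 2*j)).erase (n - 2*j) = Icc 1 (n - 2*j - 1) := by
        ext a; simp only [mem_erase, mem_Icc]; omega
      have hIcc2 : (Icc 1 (n - 2*j - 1)).erase (n - 2*j - 1) = Icc 1 (n - 2*(j+1)) := by
        ext a; simp only [mem_erase, mem_Icc]; omega
      have hIcc3 : ((Icc 1 (n - 2*j)).erase (n - 2*j - 1)).erase (n - 2*j) = Icc 1 (n - 2*(j+1)) := by
        ext a; simp only [mem_erase, mem_Icc]; omega
      -- split the disjunction
      have hsplit : ((powersetCard (k-j) (Icc 1 (n - 2*j))).filter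
          (fun s => ((n - 2*j ∈ s ∧ n - 2*j - 1 ∉ s) ∨ (n - 2*j - 1 ∈ s ∧ n - 2*j ∉ s))
            ∧ P (s ∩ Icc 1 (n - 2*j - 2))))
          = ((powersetCard (k-j) (Icc 1 (n - 2*j))).filter
              (fun s => n - 2*j ∈ s ∧ n - 2*j - 1 ∉ s ∧ P (s ∩ Icc 1 (n - 2*j - 2))))
            ∪ ((powersetCard (k-j) (Icc 1 (n - 2*j))).filter
              (fun s => n - 2*j - 1 ∈ s ∧ n - 2*j ∉ s ∧ P (s ∩ Icc 1 (n - 2*j - 2)))) := by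
        ext s
        simp only [mem_filter, mem_union]
        tauto
      rw [hsplit]
      rw [card_union_of_disjoint (by
        rw [disjoint_left]
        intro s hs1 hs2
        simp only [mem_filter] at hs1 hs2
        exact hs2.2.2.1 hs1.2.1)]
      have p0 : ((powersetCard (k-j) (Icc 1 (n - 2*j))).filter
          (fun s => n - 2*j ∈ s ∧ n - 2*j - 1 ∉ s ∧ P (s ∩ Icc 1 (n - 2*j - 2)))).card
          = ((powersetCard (k-(j+1)) (Icc 1 (n - 2*(j+1)))).filter P).card := by
        have congr0 : ∀ s ∈ powersetCard (k-j) (Icc 1 (n - 2*j)),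
            (n - 2*j ∈ s ∧ n - 2*j - 1 ∉ s ∧ P (s ∩ Icc 1 (n - 2*j - 2)))
            ↔ (n - 2*j ∈ s ∧ (n - 2*j - 1 ∉ s.erase (n - 2*j)
                ∧ P ((s.erase (n - 2*j)) ∩ Icc 1 (n - 2*j - 2)))) := by
          intro s hs
          have h1 : n - 2*j - 1 ∉ s.erase (n - 2*j) ↔ n - 2*j - 1 ∉ s := by
            simp only [mem_erase]; tauto
          have h2 : (s.erase (n - 2*j)) ∩ Icc 1 (n - 2*j - 2) = s ∩ Icc 1 (n - 2*j - 2) := by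
            ext a
            simp only [mem_inter, mem_erase, mem_Icc]
            constructor
            · tauto
            · rintro ⟨ha, h1a, h2a⟩
              exact ⟨⟨by omega, ha⟩, h1a, h2a⟩
          rw [h1, h2]
        rw [filter_congr congr0, hkj,
          card_filter_mem_erase _ _ (by simp; omega) _
            (fun t => n - 2*j - 1 ∉ t ∧ P (t ∩ Icc 1 (n - 2*j - 2))),
          hIcc1,
          filter_not_mem_powersetCard _ _ _ (fun t => P (t ∩ Icc 1 (n - 2*j - 2))),
          hIcc2]
        congr 1
        apply filter_congr
        intro t ht
        simp only [mem_powersetCard] at ht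
        have : t ∩ Icc 1 (n - 2*j - 2) = t := by
          apply inter_eq_left.mpr
          intro a ha
          have := ht.1 ha
          simp only [mem_Icc] at this ⊢
          omega
        rw [this]
      have p1 : ((powersetCard (k-j) (Icc 1 (n - 2*j))).filter
          (fun s => n - 2*j - 1 ∈ s ∧ n - 2*j ∉ s ∧ P (s ∩ Icc 1 (n - 2*j - 2)))).card
          = ((powersetCard (k-(j+1)) (Icc 1 (n - 2*(j+1)))).filter P).card := by
        have congr1 : ∀ s ∈ powersetCard (k-j) (Icc 1 (n - 2*j)),
            (n - 2*j - 1 ∈ s ∧ n - 2*j ∉ s ∧ P (s ∩ Icc 1 (n - 2*j - 2)))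
            ↔ (n - 2*j - 1 ∈ s ∧ (n - 2*j ∉ s.erase (n - 2*j - 1)
                ∧ P ((s.erase (n - 2*j - 1)) ∩ Icc 1 (n - 2*j - 2)))) := by
          intro s hs
          have h1 : n - 2*j ∉ s.erase (n - 2*j - 1) ↔ n - 2*j ∉ s := by
            simp only [mem_erase]; tauto
          have h2 : (s.erase (n - 2*j - 1)) ∩ Icc 1 (n - 2*j - 2) = s ∩ Icc 1 (n - 2*j - 2) := by
            ext a
            simp only [mem_inter, mem_erase, mem_Icc]
            constructor
            · tauto
            · rintro ⟨ha, h1a, h2a⟩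
              exact ⟨⟨by omega, ha⟩, h1a, h2a⟩
          rw [h1, h2]
        rw [filter_congr congr1, hkj,
          card_filter_mem_erase _ _ (by simp; omega) _
            (fun t => n - 2*j ∉ t ∧ P (t ∩ Icc 1 (n - 2*j - 2))),
          filter_not_mem_powersetCard _ _ _ (fun t => P (t ∩ Icc 1 (n - 2*j - 2))),
          hIcc3]
        congr 1
        apply filter_congr
        intro t ht
        simp only [mem_powersetCard] at ht
        have : t ∩ Icc 1 (n - 2*j - 2) = t := by
          apply inter_eq_left.mpr
          intro a ha
          have := ht.1 ha
          simp only [mem_Icc] at this ⊢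
          omega
        rw [this]
      rw [p0, p1]
      ring
    rw [split]
    ring

lemma count_all (n k j : ℕ) (hk : 1 ≤ k) (hj : j ≤ k - 1) (hn : 2 * k + 1 ≤ n) :
    ((powersetCard k (Icc 1 n)).filter (fun x => IsCompatible n j x)).card
    = 2^j * (n - 2*j).choose (k - j) := by
  have h := count_compatible n k j (by omega) (by omega) (fun _ => True)
  simp only [and_true] at h
  rw [h, filter_true_of_mem (fun _ _ => trivial), card_powersetCard, Nat.card_Icc]
  norm_num

lemma count_out (n k j : ℕ) (hk : 1 ≤ k) (hj : j ≤ k - 1) (hn : 2 * k + 1 ≤ n) :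
    ((powersetCard k (Icc 1 n)).filter
      (fun x => IsCompatible n j x ∧ n - 2*j ∉ x)).card
    = 2^j * (n - 2*j - 1).choose (k - j) := by
  have h := count_compatible n k j (by omega) (by omega) (fun s => n - 2*j ∉ s)
  have e1 : ((powersetCard k (Icc 1 n)).filter
      (fun x => IsCompatible n j x ∧ n - 2*j ∉ x ∩ Icc 1 (n - 2*j))).card
      = ((powersetCard k (Icc 1 n)).filter
      (fun x => IsCompatible n j x ∧ n - 2*j ∉ x)).card := by
    congr 1
    apply filter_congr
    intro x hx
    have : n - 2*j ∈ x ∩ Icc 1 (n - 2*j) ↔ n - 2*j ∈ x := by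
      simp only [mem_inter, mem_Icc, and_iff_left_iff_imp]
      intro _; omega
    rw [this]
  rw [e1] at h
  rw [h]
  have e2 : ((powersetCard (k-j) (Icc 1 (n - 2*j))).filter (fun s => n - 2*j ∉ s)).card
      = ((powersetCard (k-j) (Icc 1 (n - 2*j))).filter
          (fun s => n - 2*j ∉ s ∧ True)).card := by
    simp
  rw [e2, filter_not_mem_powersetCard _ _ _ (fun _ => True),
    filter_true_of_mem (fun _ _ => trivial), card_powersetCard]
  have : ((Icc 1 (n - 2*j)).erase (n - 2*j)).card = n - 2*j - 1 := by
    rw [card_erase_of_mem (by simp; omega), Nat.card_Icc]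
    omega
  rw [this]

lemma count_in (n k j : ℕ) (hk : 1 ≤ k) (hj : j ≤ k - 1) (hn : 2 * k + 1 ≤ n) :
    ((powersetCard k (Icc 1 n)).filter
      (fun x => IsCompatible n j x ∧ n - 2*j ∈ x)).card
    = 2^j * (n - 2*j - 1).choose (k - j - 1) := by
  have h := count_compatible n k j (by omega) (by omega) (fun s => n - 2*j ∈ s)
  have e1 : ((powersetCard k (Icc 1 n)).filter
      (fun x => IsCompatible n j x ∧ n - 2*j ∈ x ∩ Icc 1 (n - 2*j))).card
      = ((powersetCard k (Icc 1 n)).filter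
      (fun x => IsCompatible n j x ∧ n - 2*j ∈ x)).card := by
    congr 1
    apply filter_congr
    intro x hx
    have : n - 2*j ∈ x ∩ Icc 1 (n - 2*j) ↔ n - 2*j ∈ x := by
      simp only [mem_inter, mem_Icc, and_iff_left_iff_imp]
      intro _; omega
    rw [this]
  rw [e1] at h
  rw [h]
  have e2 : ((powersetCard (k-j) (Icc 1 (n - 2*j))).filter (fun s => n - 2*j ∈ s)).card
      = ((powersetCard (k-j) (Icc 1 (n - 2*j))).filter
          (fun s => n - 2*j ∈ s ∧ True)).card := by
    simp
  have hkj : k - j = (k - j - 1) + 1 := by omega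
  rw [e2, hkj, card_filter_mem_erase _ _ (by simp; omega) _ (fun s => (True : Prop)),
    filter_true_of_mem (fun _ _ => trivial), card_powersetCard]
  have : ((Icc 1 (n - 2*j)).erase (n - 2*j)).card = n - 2*j - 1 := by
    rw [card_erase_of_mem (by simp; omega), Nat.card_Icc]
    omega
  rw [this]
  norm_num

lemma sgn_sq (n j : ℕ) (x : Finset ℕ) : (sgn n j x)^2 = 1 := by
  rw [sgn, ← pow_mul, mul_comm, pow_mul, neg_one_sq, one_pow]

lemma norm_eq_one_aux (n k j : ℕ) (cond : Finset ℕ → Prop) [DecidablePred cond] (C : ℕ)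
    (hC : 0 < C)
    (hcard : ((powersetCard k (Icc 1 n)).filter (fun x => cond x)).card = 2^j * C)
    (v : EuclideanSpace ℝ (SetFamily n k))
    (hv : ∀ x : SetFamily n k,
      v x = if cond x.1 then sgn n j x.1 / Real.sqrt (2^j * (C:ℝ)) else 0) :
    ‖v‖ = 1 := by
  have hD : (0:ℝ) < 2^j * (C:ℝ) := by positivity
  rw [EuclideanSpace.norm_eq]
  have hsum : ∑ x : SetFamily n k, ‖v x‖^2 = 1 := by
    have e : ∀ x : SetFamily n k, ‖v x‖^2 = if cond x.1 then 1 / (2^j*(C:ℝ)) else 0 := by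
      intro x
      rw [hv x]
      split_ifs with h
      · rw [Real.norm_eq_abs, sq_abs, div_pow, sgn_sq, Real.sq_sqrt hD.le]
      · simp
    rw [Finset.sum_congr rfl (fun x _ => e x)]
    rw [← Finset.sum_subtype (powersetCard k (Icc 1 n)) (fun x => Iff.rfl)
        (fun s => if cond s then 1 / (2^j*(C:ℝ)) else 0)]
    rw [Finset.sum_ite, Finset.sum_const, Finset.sum_const_zero, add_zero, nsmul_eq_mul, hcard]
    push_cast
    field_simp
  rw [hsum, Real.sqrt_one]

lemma key_ratio (a m C0 C1 : ℝ) (ha : 0 ≤ a) (hm : 0 < m) (hC0 : 0 < C0) (hC1 : 0 < C1)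
    (hid : a * C0 = m * C1) :
    Real.sqrt (a/m) / Real.sqrt C1 = 1 / Real.sqrt C0 := by
  rw [div_eq_div_iff (by positivity) (by positivity), one_mul,
    ← Real.sqrt_mul (by positivity)]
  congr 1
  field_simp
  linarith [hid]

lemma nat1 (n k j : ℕ) (hk : 1 ≤ k) (hj : j ≤ k - 1) (hn : 2 * k + 1 ≤ n) :
    (n - j - k) * ((n - 2*j).choose (k - j))
      = (n - 2*j) * ((n - 2*j - 1).choose (k - j)) := by
  have h2 := Nat.add_one_mul_choose_eq (n - 2*j - 1) (k - j)
  have hm : n - 2*j - 1 + 1 = n - 2*j := by omega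
  simp only [Nat.succ_eq_add_one, hm] at h2
  calc (n - j - k) * ((n - 2*j).choose (k - j))
      = (n - 2*j).choose (k - j) * (n - 2*j - (k - j)) := by
        rw [mul_comm]; congr 1; omega
    _ = (n - 2*j).choose (k - j + 1) * (k - j + 1) :=
        (Nat.choose_succ_right_eq _ _).symm
    _ = (n - 2*j) * ((n - 2*j - 1).choose (k - j)) := h2.symm

lemma nat2 (n k j : ℕ) (hk : 1 ≤ k) (hj : j ≤ k - 1) (hn : 2 * k + 1 ≤ n) :
    (k - j) * ((n - 2*j).choose (k - j))
      = (n - 2*j) * ((n - 2*j - 1).choose (k - j - 1)) := by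
  have h2 := Nat.add_one_mul_choose_eq (n - 2*j - 1) (k - j - 1)
  have hm : n - 2*j - 1 + 1 = n - 2*j := by omega
  have hr : k - j - 1 + 1 = k - j := by omega
  simp only [Nat.succ_eq_add_one, hm, hr] at h2
  rw [h2, mul_comm]

end VDecompAux

/-- `w_∘` and `w_•` are orthonormal, `v` is a unit vector, and
`v = sqrt((n−k−j)/(n−2j))·w_∘ + sqrt((k−j)/(n−2j))·w_•`. -/
theorem v_decomposition (n k j : ℕ) (hk : 1 ≤ k) (hj : j ≤ k - 1) (hn : 2 * k + 1 ≤ n) :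
    ‖wOut n k j‖ = 1 ∧ ‖wIn n k j‖ = 1 ∧ ⟪wOut n k j, wIn n k j⟫ = 0 ∧
    ‖vVec n k j‖ = 1 ∧
    vVec n k j
      = Real.sqrt (((n : ℝ) - k - j) / ((n : ℝ) - 2 * j)) • wOut n k j
        + Real.sqrt (((k : ℝ) - j) / ((n : ℝ) - 2 * j)) • wIn n k j := by
  classical
  open VDecompAux Finset in
  have hjk : j ≤ k - 1 := hj
  have hC0 : 0 < (n - 2*j).choose (k - j) := Nat.choose_pos (by omega)
  have hC1 : 0 < (n - 2*j - 1).choose (k - j) := Nat.choose_pos (by omega)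
  have hC2 : 0 < (n - 2*j - 1).choose (k - j - 1) := Nat.choose_pos (by omega)
  have hwo : ‖wOut n k j‖ = 1 :=
    norm_eq_one_aux n k j (fun s => IsCompatible n j s ∧ n - 2*j ∉ s) _ hC1
      (count_out n k j hk hj hn) _ (fun x => rfl)
  have hwi : ‖wIn n k j‖ = 1 :=
    norm_eq_one_aux n k j (fun s => IsCompatible n j s ∧ n - 2*j ∈ s) _ hC2
      (count_in n k j hk hj hn) _ (fun x => rfl)
  have hv : ‖vVec n k j‖ = 1 :=
    norm_eq_one_aux n k j (fun s => IsCompatible n j s) _ hC0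
      (count_all n k j hk hj hn) _ (fun x => rfl)
  have hinner : ⟪wOut n k j, wIn n k j⟫ = 0 := by
    rw [PiLp.inner_apply]
    apply Finset.sum_eq_zero
    intro x _
    have e1 : (wOut n k j) x = if IsCompatible n j x.1 ∧ n - 2*j ∉ x.1 then
        sgn n j x.1 / Real.sqrt (2 ^ j * ((n - 2*j - 1).choose (k - j) : ℝ)) else 0 := rfl
    have e2 : (wIn n k j) x = if IsCompatible n j x.1 ∧ n - 2*j ∈ x.1 then
        sgn n j x.1 / Real.sqrt (2 ^ j * ((n - 2*j - 1).choose (k - j - 1) : ℝ)) else 0 := rfl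
    simp only [RCLike.inner_apply, conj_trivial]
    rw [e1, e2]
    by_cases hb : n - 2*j ∈ x.1
    · rw [if_neg (show ¬(IsCompatible n j x.1 ∧ n - 2*j ∉ x.1) from fun h => h.2 hb), mul_zero]
    · rw [if_neg (show ¬(IsCompatible n j x.1 ∧ n - 2*j ∈ x.1) from fun h => hb h.2), zero_mul]
  refine ⟨hwo, hwi, hinner, hv, ?_⟩
  -- the decomposition
  have hD0 : (0:ℝ) < 2^j * ((n - 2*j).choose (k - j) : ℝ) := by positivity
  have hD1 : (0:ℝ) < 2^j * ((n - 2*j - 1).choose (k - j) : ℝ) := by positivity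
  have hD2 : (0:ℝ) < 2^j * ((n - 2*j - 1).choose (k - j - 1) : ℝ) := by positivity
  have hm : (0:ℝ) < (n:ℝ) - 2*j := by
    have : 2*j + 1 ≤ n := by omega
    have := (Nat.cast_le (α := ℝ)).mpr this
    push_cast at this
    linarith
  have hcast1 : ((n - j - k : ℕ) : ℝ) = (n:ℝ) - j - k := by
    rw [Nat.cast_sub (by omega), Nat.cast_sub (by omega)]
  have hcast2 : ((n - 2*j : ℕ) : ℝ) = (n:ℝ) - 2*j := by
    rw [Nat.cast_sub (by omega)]; push_cast; ring
  have hcast3 : ((k - j : ℕ) : ℝ) = (k:ℝ) - j := by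
    rw [Nat.cast_sub (by omega)]
  have hid1 : ((n:ℝ) - k - j) * (2^j * ((n - 2*j).choose (k - j) : ℝ))
      = ((n:ℝ) - 2*j) * (2^j * ((n - 2*j - 1).choose (k - j) : ℝ)) := by
    have hr : ((n - j - k : ℕ) : ℝ) * ((n - 2*j).choose (k - j) : ℝ)
        = ((n - 2*j : ℕ) : ℝ) * ((n - 2*j - 1).choose (k - j) : ℝ) := by
      exact_mod_cast congrArg (Nat.cast (R := ℝ)) (nat1 n k j hk hj hn)
    rw [hcast1, hcast2] at hr
    linear_combination (2:ℝ)^j * hr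
  have hid2 : ((k:ℝ) - j) * (2^j * ((n - 2*j).choose (k - j) : ℝ))
      = ((n:ℝ) - 2*j) * (2^j * ((n - 2*j - 1).choose (k - j - 1) : ℝ)) := by
    have hr : ((k - j : ℕ) : ℝ) * ((n - 2*j).choose (k - j) : ℝ)
        = ((n - 2*j : ℕ) : ℝ) * ((n - 2*j - 1).choose (k - j - 1) : ℝ) := by
      exact_mod_cast congrArg (Nat.cast (R := ℝ)) (nat2 n k j hk hj hn)
    rw [hcast3, hcast2] at hr
    linear_combination (2:ℝ)^j * hr
  have ha1 : (0:ℝ) ≤ (n:ℝ) - k - j := by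
    have : (j:ℝ) + k ≤ n := by
      have : j + k ≤ n := by omega
      exact_mod_cast this
    linarith
  have ha2 : (0:ℝ) ≤ (k:ℝ) - j := by
    have : (j:ℝ) ≤ k := by exact_mod_cast (by omega : j ≤ k)
    linarith
  have hr1 := key_ratio ((n:ℝ) - k - j) ((n:ℝ) - 2*j)
    (2^j * ((n - 2*j).choose (k - j) : ℝ)) (2^j * ((n - 2*j - 1).choose (k - j) : ℝ))
    ha1 hm hD0 hD1 hid1
  have hr2 := key_ratio ((k:ℝ) - j) ((n:ℝ) - 2*j)
    (2^j * ((n - 2*j).choose (k - j) : ℝ)) (2^j * ((n - 2*j - 1).choose (k - j - 1) : ℝ))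
    ha2 hm hD0 hD2 hid2
  ext x
  have ev : (vVec n k j) x = if IsCompatible n j x.1 then
      sgn n j x.1 / Real.sqrt (2 ^ j * ((n - 2*j).choose (k - j) : ℝ)) else 0 := rfl
  have e1 : (wOut n k j) x = if IsCompatible n j x.1 ∧ n - 2*j ∉ x.1 then
      sgn n j x.1 / Real.sqrt (2 ^ j * ((n - 2*j - 1).choose (k - j) : ℝ)) else 0 := rfl
  have e2 : (wIn n k j) x = if IsCompatible n j x.1 ∧ n - 2*j ∈ x.1 then
      sgn n j x.1 / Real.sqrt (2 ^ j * ((n - 2*j - 1).choose (k - j - 1) : ℝ)) else 0 := rfl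
  rw [PiLp.add_apply, PiLp.smul_apply, PiLp.smul_apply, smul_eq_mul, smul_eq_mul,
    ev, e1, e2]
  by_cases hc : IsCompatible n j x.1
  · by_cases hb : n - 2*j ∈ x.1
    · rw [if_pos hc, if_neg (show ¬(IsCompatible n j x.1 ∧ n - 2*j ∉ x.1) from fun h => h.2 hb), if_pos (show IsCompatible n j x.1 ∧ n - 2*j ∈ x.1 from ⟨hc, hb⟩), mul_zero, zero_add]
      calc sgn n j x.1 / Real.sqrt (2 ^ j * ((n - 2*j).choose (k - j) : ℝ))
          = sgn n j x.1 * (1 / Real.sqrt (2 ^ j * ((n - 2*j).choose (k - j) : ℝ))) := by ring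
        _ = sgn n j x.1 * (Real.sqrt (((k:ℝ) - j) / ((n:ℝ) - 2*j))
              / Real.sqrt (2 ^ j * ((n - 2*j - 1).choose (k - j - 1) : ℝ))) := by rw [hr2]
        _ = Real.sqrt (((k:ℝ) - j) / ((n:ℝ) - 2*j))
              * (sgn n j x.1 / Real.sqrt (2 ^ j * ((n - 2*j - 1).choose (k - j - 1) : ℝ))) := by
            ring
    · rw [if_pos hc, if_pos (show IsCompatible n j x.1 ∧ n - 2*j ∉ x.1 from ⟨hc, hb⟩), if_neg (show ¬(IsCompatible n j x.1 ∧ n - 2*j ∈ x.1) from fun h => hb h.2), mul_zero, add_zero]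
      calc sgn n j x.1 / Real.sqrt (2 ^ j * ((n - 2*j).choose (k - j) : ℝ))
          = sgn n j x.1 * (1 / Real.sqrt (2 ^ j * ((n - 2*j).choose (k - j) : ℝ))) := by ring
        _ = sgn n j x.1 * (Real.sqrt (((n:ℝ) - k - j) / ((n:ℝ) - 2*j))
              / Real.sqrt (2 ^ j * ((n - 2*j - 1).choose (k - j) : ℝ))) := by rw [hr1]
        _ = Real.sqrt (((n:ℝ) - k - j) / ((n:ℝ) - 2*j))
              * (sgn n j x.1 / Real.sqrt (2 ^ j * ((n - 2*j - 1).choose (k - j) : ℝ))) := by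
            ring
  · rw [if_neg hc, if_neg (show ¬(IsCompatible n j x.1 ∧ n - 2*j ∉ x.1) from fun h => hc h.1),
      if_neg (show ¬(IsCompatible n j x.1 ∧ n - 2*j ∈ x.1) from fun h => hc h.1), mul_zero, mul_zero,
      add_zero]
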